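/- Let A be a deterministic parity tree automaton over a finite nonempty alphabet Σ and let p be a productive state of A (p occurs in some accepting run of A). Then there exist a state q, a path in A from p to q, and two paths from q to q, each of which is an accepting loop, that are branching: there is an index i ≥ 1, at most the length of each of the two loops, such that for all j < i the j-th steps of the two loops read the same letter in the same direction, while their i-th steps read the same letter in different directions. -/

import Mathlib

open Filter

/-- A deterministic parity tree automaton over alphabet `Alpha` with state set `Q`. -/
structure DPTA (Alpha : Type) (Q : Type) where
  init : Q
  delta : Q → Alpha → Q × Q
  rank : Q → ℕ

namespace DPTA

variable {Alpha Q : Type}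

/-- The state reached in one step from `q` reading letter `s` in direction `d`. -/
def next (M : DPTA Alpha Q) (q : Q) (s : Alpha) (d : Bool) : Q :=
  if d then (M.delta q s).2 else (M.delta q s).1

/-- The state of the run started in `q` on the tree `t` at the node `v`
(nodes are words over `{0,1}`, head = first direction from the root). -/
def runFrom (M : DPTA Alpha Q) : Q → (List Bool → Alpha) → List Bool → Q
  | q, _, [] => q
  | q, t, d :: v => runFrom M (M.next q (t []) d) (fun u => t (d :: u)) v

/-- The state of the (unique) run of `M` on `t` at node `v`. -/
def run (M : DPTA Alpha Q) (t : List Bool → Alpha) (v : List Bool) : Q :=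
  runFrom M M.init t v

/-- Parity acceptance: the largest value occurring infinitely often is even. -/
def ParityAccept (f : ℕ → ℕ) : Prop :=
  Even (sSup {r : ℕ | ∃ᶠ n in atTop, f n = r})

/-- The prefix of length `n` of an infinite path. -/
def pref (π : ℕ → Bool) (n : ℕ) : List Bool :=
  List.ofFn fun i : Fin n => π i

/-- The run of `M` on `t` started at state `q` is accepting. -/
def AcceptsFrom (M : DPTA Alpha Q) (q : Q) (t : List Bool → Alpha) : Prop :=
  ∀ π : ℕ → Bool, ParityAccept fun n => M.rank (runFrom M q t (pref π n))

/-- The language recognised by `M`: trees with accepting run. -/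
def Lang (M : DPTA Alpha Q) : Set (List Bool → Alpha) :=
  {t | M.AcceptsFrom M.init t}

/-- The state reached from `q` following a finite sequence of steps
(steps = letter together with direction). -/
def follow (M : DPTA Alpha Q) (q : Q) (steps : List (Alpha × Bool)) : Q :=
  steps.foldl (fun p s => M.next p s.1 s.2) q

/-- All states visited along a path (the starting state included). -/
def statesOn (M : DPTA Alpha Q) (q : Q) (steps : List (Alpha × Bool)) : List Q :=
  List.scanl (fun p s => M.next p s.1 s.2) q steps

/-- The largest rank of a state visited along a path. -/
def maxRankOn (M : DPTA Alpha Q) (q : Q) (steps : List (Alpha × Bool)) : ℕ :=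
  ((M.statesOn q steps).map M.rank).foldr max 0

/-- `steps` forms a loop at `q` (a path of positive length from `q` to `q`). -/
def IsLoop (M : DPTA Alpha Q) (q : Q) (steps : List (Alpha × Bool)) : Prop :=
  steps ≠ [] ∧ M.follow q steps = q

/-- `M` contains an `(i,k)`-flower: loops `lam i, …, lam k` at a common state `q`,
the largest rank on `lam j` has the parity of `j` and increases strictly with `j`. -/
def HasFlower (M : DPTA Alpha Q) (i k : ℕ) : Prop :=
  ∃ (q : Q) (lam : ℕ → List (Alpha × Bool)),
    (∀ j, i ≤ j → j ≤ k → M.IsLoop q (lam j) ∧ M.maxRankOn q (lam j) % 2 = j % 2) ∧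
    (∀ j, i ≤ j → j < k → M.maxRankOn q (lam j) < M.maxRankOn q (lam (j + 1)))

/-- `q` is reachable from the initial state. -/
def Reachable (M : DPTA Alpha Q) (q : Q) : Prop :=
  ∃ steps, M.follow M.init steps = q

/-- `q` is productive: it occurs in some accepting run of `M`. -/
def Productive (M : DPTA Alpha Q) (q : Q) : Prop :=
  ∃ t ∈ M.Lang, ∃ v, M.run t v = q

/-- The transition from `q` reading `s` is used in some accepting run of `M`. -/
def ProductiveTrans (M : DPTA Alpha Q) (q : Q) (s : Alpha) : Prop :=
  ∃ t ∈ M.Lang, ∃ v, M.run t v = q ∧ t v = s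

/-- `q` is all-rejecting: started from `q`, the automaton accepts no tree. -/
def AllRejecting (M : DPTA Alpha Q) (q : Q) : Prop :=
  ∀ t, ¬ M.AcceptsFrom q t

/-- `M` is normalized: every state is reachable, every state is productive except
possibly one all-rejecting state `⊥` with `δ(⊥,σ) = (⊥,⊥)`, and every transition is
productive or of the form `δ(q,σ) = (⊥,⊥)`. -/
def Normalized (M : DPTA Alpha Q) : Prop :=
  (∀ q, M.Reachable q) ∧
  ∃ bot : Option Q,
    (∀ q, some q ≠ bot → M.Productive q) ∧
    (∀ q, some q = bot → M.AllRejecting q ∧ ∀ s, M.delta q s = (q, q)) ∧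
    (∀ q s, M.ProductiveTrans q s ∨
      (some (M.delta q s).1 = bot ∧ some (M.delta q s).2 = bot))

end DPTA

namespace BranchAux

open DPTA List

variable {Alpha Q : Type}

/-- Subtree of `t` rooted at node `v`. -/
def subt (t : List Bool → Alpha) (v : List Bool) : List Bool → Alpha := fun u => t (v ++ u)

@[simp] lemma subt_nil (t : List Bool → Alpha) : subt t [] = t := rfl

lemma subt_append (t : List Bool → Alpha) (v w : List Bool) :
    subt (subt t v) w = subt t (v ++ w) := by
  funext u; simp [subt, List.append_assoc]

/-- The steps (letter, direction) read along the node `v` of the tree `t`. -/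
def seg : (List Bool → Alpha) → List Bool → List (Alpha × Bool)
  | _, [] => []
  | t, d :: v => (t [], d) :: seg (fun u => t (d :: u)) v

@[simp] lemma seg_nil (t : List Bool → Alpha) : seg t [] = [] := rfl

@[simp] lemma seg_cons (t : List Bool → Alpha) (d : Bool) (v : List Bool) :
    seg t (d :: v) = (t [], d) :: seg (fun u => t (d :: u)) v := rfl

@[simp] lemma seg_length (t : List Bool → Alpha) (v : List Bool) :
    (seg t v).length = v.length := by
  induction v generalizing t with
  | nil => rfl
  | cons d v ih => simp [seg, ih]

lemma follow_seg (M : DPTA Alpha Q) (q : Q) (t : List Bool → Alpha) (v : List Bool) :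
    M.follow q (seg t v) = M.runFrom q t v := by
  induction v generalizing q t with
  | nil => rfl
  | cons d v ih => simpa [DPTA.follow, DPTA.runFrom, seg] using ih (M.next q (t []) d) _

lemma runFrom_append (M : DPTA Alpha Q) (q : Q) (t : List Bool → Alpha) (v w : List Bool) :
    M.runFrom q t (v ++ w) = M.runFrom (M.runFrom q t v) (subt t v) w := by
  induction v generalizing q t with
  | nil => rfl
  | cons d v ih =>
      show M.runFrom (M.next q (t []) d) (fun u => t (d :: u)) (v ++ w) = _
      rw [ih]
      rfl

@[simp] lemma maxRankOn_nil (M : DPTA Alpha Q) (q : Q) :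
    M.maxRankOn q [] = M.rank q := by
  simp [DPTA.maxRankOn, DPTA.statesOn]

@[simp] lemma maxRankOn_cons (M : DPTA Alpha Q) (q : Q) (s : Alpha × Bool)
    (l : List (Alpha × Bool)) :
    M.maxRankOn q (s :: l) = max (M.rank q) (M.maxRankOn (M.next q s.1 s.2) l) := by
  simp [DPTA.maxRankOn, DPTA.statesOn, List.scanl]

/-- Upper bound for max rank along a tree segment. -/
lemma maxRankOn_le (M : DPTA Alpha Q) (q : Q) (t : List Bool → Alpha) (v : List Bool) {r : ℕ}
    (h : ∀ u, u <+: v → M.rank (M.runFrom q t u) ≤ r) :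
    M.maxRankOn q (seg t v) ≤ r := by
  induction v generalizing q t with
  | nil => simpa [DPTA.runFrom] using h [] (by simp)
  | cons d v ih =>
      simp only [seg_cons, maxRankOn_cons]
      refine max_le (by simpa [DPTA.runFrom] using h [] (by simp)) (ih _ _ ?_)
      intro u hu
      simpa [DPTA.runFrom] using h (d :: u) (by simpa using hu)

/-- Lower bound: the rank at any node of a tree segment bounds the max rank from below. -/
lemma le_maxRankOn (M : DPTA Alpha Q) (q : Q) (t : List Bool → Alpha) {u v : List Bool}
    (h : u <+: v) :
    M.rank (M.runFrom q t u) ≤ M.maxRankOn q (seg t v) := by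
  induction v generalizing q t u with
  | nil =>
      have : u = [] := List.prefix_nil.mp h
      subst this; simp [DPTA.runFrom]
  | cons d v ih =>
      rcases u with _ | ⟨d', u⟩
      · simp [DPTA.runFrom]
      · obtain ⟨rfl, hu⟩ : d' = d ∧ u <+: v := by
          rcases h with ⟨w, hw⟩
          injection hw with h1 h2
          exact ⟨h1, ⟨w, h2⟩⟩
        simp only [seg_cons, maxRankOn_cons]
        have := ih (M.next q (t []) d') (fun u => t (d' :: u)) hu
        exact le_trans (by simpa [DPTA.runFrom] using this) (le_max_right _ _)

end BranchAux
namespace BranchAux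

open DPTA List Filter

variable {Alpha Q : Type}

@[simp] lemma pref_length (π : ℕ → Bool) (n : ℕ) : (pref π n).length = n := by
  simp [DPTA.pref]

@[simp] lemma pref_getElem (π : ℕ → Bool) (n k : ℕ) (h : k < (pref π n).length) :
    (pref π n)[k] = π k := by
  simp [DPTA.pref]

lemma pref_eq_of_getElem (π : ℕ → Bool) (S : List Bool)
    (h : ∀ k (hk : k < S.length), S[k] = π k) : pref π S.length = S := by
  refine List.ext_getElem (by simp) ?_
  intro k h1 h2
  rw [pref_getElem, h k h2]

lemma eq_pref_of_prefix {π : ℕ → Bool} {S : List Bool} {n : ℕ} (h : S <+: pref π n) :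
    S = pref π S.length := by
  refine (pref_eq_of_getElem π S ?_).symm
  intro k hk
  rw [h.getElem hk, pref_getElem]

lemma frequently_shift {P : ℕ → Prop} (k : ℕ)
    (h : ∃ᶠ n in atTop, P n) : ∃ᶠ n in atTop, P (k + n) := by
  rw [Filter.frequently_atTop] at h ⊢
  intro a
  obtain ⟨b, hb, hPb⟩ := h (k + a)
  refine ⟨b - k, by omega, ?_⟩
  have hkb : k + (b - k) = b := by omega
  rw [hkb]
  exact hPb

lemma frequently_unshift {P : ℕ → Prop} (k : ℕ)
    (h : ∃ᶠ n in atTop, P (k + n)) : ∃ᶠ n in atTop, P n := by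
  rw [Filter.frequently_atTop] at h ⊢
  intro a
  obtain ⟨b, hb, hPb⟩ := h a
  exact ⟨k + b, by omega, hPb⟩

lemma parityAccept_shift {f : ℕ → ℕ} (k : ℕ) (h : ParityAccept f) :
    ParityAccept (fun n => f (k + n)) := by
  have : {r : ℕ | ∃ᶠ n in atTop, f (k + n) = r} = {r : ℕ | ∃ᶠ n in atTop, f n = r} := by
    ext r
    exact ⟨fun hr => frequently_unshift k hr, fun hr => frequently_shift k hr⟩
  unfold ParityAccept at h ⊢
  rw [this]
  exact h

/-- a value occurring infinitely often, for a function into a finite type -/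
lemma freq_of_finite {β : Type*} [Finite β] (g : ℕ → β) :
    ∃ b, ∀ N, ∃ n ≥ N, g n = b := by
  obtain ⟨y, hy⟩ := Finite.exists_infinite_fiber g
  refine ⟨y, fun N => ?_⟩
  have hin : (g ⁻¹' {y}).Infinite := Set.infinite_coe_iff.mp hy
  obtain ⟨b, hb, hbN⟩ := hin.exists_gt N
  exact ⟨b, le_of_lt hbN, hb⟩

/-- Extraction from parity acceptance: an even value `r` occurring infinitely often
such that eventually all values are `≤ r`. -/
lemma extract {f : ℕ → ℕ} {B : ℕ} (hb : ∀ n, f n ≤ B) (h : ParityAccept f) :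
    ∃ r, Even r ∧ (∀ N, ∃ n ≥ N, f n = r) ∧ ∃ N, ∀ m, N ≤ m → f m ≤ r := by
  set S := {r : ℕ | ∃ᶠ n in atTop, f n = r} with hS
  have hne : S.Nonempty := by
    obtain ⟨b, hbf⟩ := freq_of_finite (fun n => (⟨f n, Nat.lt_succ_of_le (hb n)⟩ : Fin (B+1)))
    refine ⟨(b : ℕ), ?_⟩
    rw [hS, Set.mem_setOf_eq, Filter.frequently_atTop]
    intro a
    obtain ⟨n, hn, hgn⟩ := hbf a
    exact ⟨n, hn, by rw [← hgn]⟩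
  have hbdd : BddAbove S := by
    refine ⟨B, fun r hr => ?_⟩
    rw [hS, Set.mem_setOf_eq, Filter.frequently_atTop] at hr
    obtain ⟨n, -, hn⟩ := hr 0
    exact hn ▸ hb n
  have hmem : sSup S ∈ S := Nat.sSup_mem hne hbdd
  refine ⟨sSup S, h, ?_, ?_⟩
  · rw [hS, Set.mem_setOf_eq, Filter.frequently_atTop] at hmem
    exact fun N => hmem N
  · -- eventually f m ≤ sSup S
    have hnotS : ∀ v, sSup S < v → ∀ᶠ n in atTop, f n ≠ v := by
      intro v hv
      by_contra hcon
      rw [Filter.not_eventually] at hcon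
      have : v ∈ S := by simpa [hS] using hcon
      exact absurd (le_csSup hbdd this) (by omega)
    have hall : ∀ᶠ n in atTop, ∀ v ∈ Finset.filter (fun v => sSup S < v) (Finset.range (B+1)),
        f n ≠ v := by
      refine (Filter.eventually_all_finset _).mpr ?_
      intro v hv
      exact hnotS v (Finset.mem_filter.mp hv).2
    rw [Filter.eventually_atTop] at hall
    obtain ⟨N, hN⟩ := hall
    refine ⟨N, fun m hm => ?_⟩
    by_contra hcon
    exact hN m hm (f m) (Finset.mem_filter.mpr ⟨Finset.mem_range.mpr (Nat.lt_succ_of_le (hb m)),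
      by omega⟩) rfl

/-- Acceptance is inherited by subtrees along the run. -/
lemma acceptsFrom_subt (M : DPTA Alpha Q) {q : Q} {t : List Bool → Alpha}
    (H : M.AcceptsFrom q t) (v : List Bool) :
    M.AcceptsFrom (M.runFrom q t v) (subt t v) := by
  intro π
  set π' : ℕ → Bool := fun n => if h : n < v.length then v[n] else π (n - v.length) with hπ'
  have key : ∀ n, pref π' (v.length + n) = v ++ pref π n := by
    intro n
    refine List.ext_getElem (by simp) ?_
    intro k h1 h2
    rw [pref_getElem]
    rcases lt_or_ge k v.length with hk | hk
    · rw [List.getElem_append_left hk]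
      simp [hπ', hk]
    · rw [List.getElem_append_right hk]
      simp only [hπ', dif_neg (not_lt.mpr hk)]
      rw [pref_getElem]
  have H' := parityAccept_shift v.length (H π')
  have : (fun n => M.rank (M.runFrom q t (pref π' (v.length + n))))
      = fun n => M.rank (M.runFrom (M.runFrom q t v) (subt t v) (pref π n)) := by
    funext n
    rw [key n, runFrom_append]
  rwa [this] at H'

end BranchAux
namespace BranchAux

open DPTA List Filter

variable {Alpha Q : Type}

lemma pref_const_false (n : ℕ) : pref (fun _ => false) n = List.replicate n false := by
  simp [DPTA.pref]

lemma prefix_replicate {u : List Bool} {n : ℕ} (h : u <+: List.replicate n false) :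
    u = List.replicate u.length false := by
  rw [List.eq_replicate_iff]
  refine ⟨rfl, fun b hb => ?_⟩
  have := h.subset hb
  exact List.eq_of_mem_replicate this

lemma rank_le_sup (M : DPTA Alpha Q) [Fintype Q] (q : Q) :
    M.rank q ≤ Finset.univ.sup M.rank :=
  Finset.le_sup (Finset.mem_univ q)

lemma maxRankOn_le_sup (M : DPTA Alpha Q) [Fintype Q] (q : Q) (l : List (Alpha × Bool)) :
    M.maxRankOn q l ≤ Finset.univ.sup M.rank := by
  induction l generalizing q with
  | nil => simpa using rank_le_sup M q
  | cons s l ih => simpa using ⟨rank_le_sup M q, ih _⟩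

/-- Claim B: below the root of any accepted tree there is a state with an even-max-rank
return segment. -/
lemma claimB (M : DPTA Alpha Q) [Fintype Q] (q : Q) (t : List Bool → Alpha)
    (H : M.AcceptsFrom q t) :
    ∃ x : List Bool × Bool × List Bool,
      M.runFrom q t (x.1 ++ x.2.1 :: x.2.2) = M.runFrom q t x.1 ∧
      Even (M.maxRankOn (M.runFrom q t x.1) (seg (subt t x.1) (x.2.1 :: x.2.2))) := by
  classical
  set B := Finset.univ.sup M.rank with hB
  set f : ℕ → ℕ := fun n => M.rank (M.runFrom q t (pref (fun _ => false) n)) with hf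
  have hfb : ∀ n, f n ≤ B := fun n => rank_le_sup M _
  obtain ⟨r, hEv, hfreq, N, hN⟩ := extract hfb (H (fun _ => false))
  set g : ℕ → Q := fun n => M.runFrom q t (List.replicate n false) with hg
  have hfg : ∀ n, f n = M.rank (g n) := by intro n; rw [hf, hg]; simp [pref_const_false]
  obtain ⟨a, ha⟩ := freq_of_finite g
  obtain ⟨i, hiN, hgi⟩ := ha N
  obtain ⟨m, him, hfm⟩ := hfreq i
  obtain ⟨n2, hn2, hgn2⟩ := ha (m + 1)
  have hin2 : i < n2 := by omega
  refine ⟨(List.replicate i false, false, List.replicate (n2 - i - 1) false), ?_, ?_⟩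
  · show M.runFrom q t (List.replicate i false ++
        false :: List.replicate (n2 - i - 1) false) = _
    have h1 : (false : Bool) :: List.replicate (n2 - i - 1) false
        = List.replicate (n2 - i) false := by
      rw [show n2 - i = (n2 - i - 1) + 1 by omega]
      simp [List.replicate_succ]
    rw [h1, ← List.replicate_add, show i + (n2 - i) = n2 by omega]
    rw [show M.runFrom q t (List.replicate n2 false) = g n2 from rfl, hgn2, ← hgi]
  · have hrun : ∀ u : List Bool,
        M.runFrom (M.runFrom q t (List.replicate i false)) (subt t (List.replicate i false)) u
          = M.runFrom q t (List.replicate i false ++ u) := fun u => (runFrom_append ..).symm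
    have key : M.maxRankOn (M.runFrom q t (List.replicate i false))
        (seg (subt t (List.replicate i false))
          (false :: List.replicate (n2 - i - 1) false)) = r := by
      have h1 : (false : Bool) :: List.replicate (n2 - i - 1) false
          = List.replicate (n2 - i) false := by
        rw [show n2 - i = (n2 - i - 1) + 1 by omega]
        simp [List.replicate_succ]
      rw [h1]
      apply _root_.le_antisymm
      · apply maxRankOn_le
        intro u hu
        rw [hrun u]
        have hu' : u = List.replicate u.length false := prefix_replicate hu
        rw [hu', ← List.replicate_add]
        have : M.rank (M.runFrom q t (List.replicate (i + u.length) false))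
            = f (i + u.length) := by rw [hfg]
        rw [this]
        exact hN _ (by omega)
      · have hpre : List.replicate (m - i) false <+: List.replicate (n2 - i) false := by
          have := List.take_prefix (m - i) (List.replicate (n2 - i) false)
          rwa [List.take_replicate, min_eq_left (by omega)] at this
        have := le_maxRankOn M (M.runFrom q t (List.replicate i false))
          (subt t (List.replicate i false)) hpre
        rw [hrun, ← List.replicate_add, show i + (m - i) = m by omega] at this
        have hfm' : M.rank (M.runFrom q t (List.replicate m false)) = f m := by rw [hfg]
        rwa [hfm', hfm] at this
    rw [key]
    exact hEv

/-- Totalized selector for Claim B. -/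
noncomputable def pick (M : DPTA Alpha Q) [Fintype Q] (q : Q) (t : List Bool → Alpha) :
    List Bool × Bool × List Bool :=
  @dite _ (M.AcceptsFrom q t) (Classical.dec _)
    (fun h => (claimB M q t h).choose) (fun _ => ([], false, []))

lemma pick_spec (M : DPTA Alpha Q) [Fintype Q] {q : Q} {t : List Bool → Alpha}
    (h : M.AcceptsFrom q t) :
    M.runFrom q t ((pick M q t).1 ++ (pick M q t).2.1 :: (pick M q t).2.2)
        = M.runFrom q t (pick M q t).1 ∧
    Even (M.maxRankOn (M.runFrom q t (pick M q t).1)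
      (seg (subt t (pick M q t).1) ((pick M q t).2.1 :: (pick M q t).2.2))) := by
  have : pick M q t = (claimB M q t h).choose := by
    rw [pick, dif_pos h]
  rw [this]
  exact (claimB M q t h).choose_spec

end BranchAux
namespace BranchAux

open DPTA List Filter

variable {Alpha Q : Type}

variable (M : DPTA Alpha Q) [Fintype Q] (p : Q) (t0 : List Bool → Alpha)

/-- The branch-off data at stage `n` (given the node `V`). -/
noncomputable def stageAt (V : List Bool) : List Bool × Bool × List Bool :=
  pick M (M.runFrom p t0 V) (subt t0 V)

/-- The sequence of nodes: at each stage follow the chosen even-return segment's start,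
then branch off in the opposite direction of the segment's first step. -/
noncomputable def Vseq : ℕ → List Bool
  | 0 => []
  | n + 1 =>
      (Vseq n ++ (stageAt M p t0 (Vseq n)).1) ++ [!(stageAt M p t0 (Vseq n)).2.1]

/-- The node at stage `n` where the even loop is rooted. -/
noncomputable def Wseq (n : ℕ) : List Bool :=
  Vseq M p t0 n ++ (stageAt M p t0 (Vseq M p t0 n)).1

lemma Vseq_succ (n : ℕ) :
    Vseq M p t0 (n + 1) = Wseq M p t0 n ++ [!(stageAt M p t0 (Vseq M p t0 n)).2.1] := rfl

lemma V_prefix_W (n : ℕ) : Vseq M p t0 n <+: Wseq M p t0 n := List.prefix_append _ _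

lemma W_prefix_Vsucc (n : ℕ) : Wseq M p t0 n <+: Vseq M p t0 (n + 1) := by
  rw [Vseq_succ]; exact List.prefix_append _ _

lemma V_prefix_Vsucc (n : ℕ) : Vseq M p t0 n <+: Vseq M p t0 (n + 1) :=
  (V_prefix_W M p t0 n).trans (W_prefix_Vsucc M p t0 n)

lemma Vmono {m n : ℕ} (h : m ≤ n) : Vseq M p t0 m <+: Vseq M p t0 n := by
  induction n with
  | zero => rw [Nat.le_zero.mp h]
  | succ n ih =>
      rcases Nat.lt_or_ge m (n + 1) with h' | h'
      · exact (ih (by omega)).trans (V_prefix_Vsucc M p t0 n)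
      · rw [Nat.le_antisymm h h']

lemma lenV (n : ℕ) : n ≤ (Vseq M p t0 n).length := by
  induction n with
  | zero => simp
  | succ n ih =>
      rw [Vseq_succ]
      have := (V_prefix_W M p t0 n).length_le
      simp only [List.length_append, List.length_cons, List.length_nil]
      omega

/-- The infinite path passing through all the branch-off nodes. -/
noncomputable def piP : ℕ → Bool := fun k => (Vseq M p t0 (k + 1)).getD k false

lemma getV {n k : ℕ} (h : k < (Vseq M p t0 n).length) :
    (Vseq M p t0 n)[k] = piP M p t0 k := by
  have hk1 : k < (Vseq M p t0 (k + 1)).length := lt_of_lt_of_le (by omega) (lenV M p t0 (k + 1))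
  rw [piP, List.getD_eq_getElem _ _ hk1]
  rcases le_total n (k + 1) with h' | h'
  · exact (Vmono M p t0 h').getElem h
  · exact ((Vmono M p t0 h').getElem hk1).symm

lemma getW {n k : ℕ} (h : k < (Wseq M p t0 n).length) :
    (Wseq M p t0 n)[k] = piP M p t0 k := by
  rw [(W_prefix_Vsucc M p t0 n).getElem h]
  exact getV M p t0 _

lemma W_eq_pref (n : ℕ) :
    pref (piP M p t0) (Wseq M p t0 n).length = Wseq M p t0 n :=
  pref_eq_of_getElem _ _ (fun k hk => getW M p t0 hk)

end BranchAux
namespace BranchAux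

open DPTA List Filter

variable {Alpha Q : Type}

lemma main (M : DPTA Alpha Q) [Fintype Q] (p : Q) (t0 : List Bool → Alpha)
    (H0 : M.AcceptsFrom p t0) :
    ∃ (q : Q) (path l0 l1 : List (Alpha × Bool)),
      M.follow p path = q ∧
      M.IsLoop q l0 ∧ Even (M.maxRankOn q l0) ∧
      M.IsLoop q l1 ∧ Even (M.maxRankOn q l1) ∧
      ∃ kk : ℕ, kk < l0.length ∧ kk < l1.length ∧
        (∀ j, j < kk → l0[j]? = l1[j]?) ∧
        ∃ s d0 d1, l0[kk]? = some (s, d0) ∧ l1[kk]? = some (s, d1) ∧ d0 ≠ d1 := by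
  classical
  set V : ℕ → List Bool := Vseq M p t0 with hV
  set W : ℕ → List Bool := Wseq M p t0 with hW
  set π : ℕ → Bool := piP M p t0 with hπ
  set st : ℕ → List Bool × Bool × List Bool := fun n => stageAt M p t0 (Vseq M p t0 n) with hst
  set a : ℕ → Q := fun n => M.runFrom p t0 (W n) with ha
  -- basic identities
  have hWVn : ∀ n, W n = V n ++ (st n).1 := fun n => rfl
  have hRa : ∀ n, M.runFrom (M.runFrom p t0 (V n)) (subt t0 (V n)) (st n).1 = a n := by
    intro n
    rw [ha]
    simp only [hWVn]
    exact (runFrom_append M p t0 (V n) (st n).1).symm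
  have hsub : ∀ n, subt (subt t0 (V n)) (st n).1 = subt t0 (W n) := by
    intro n; rw [subt_append]; rfl
  -- the per-stage specification
  have spec : ∀ n,
      M.runFrom (M.runFrom p t0 (V n)) (subt t0 (V n))
          ((st n).1 ++ (st n).2.1 :: (st n).2.2)
        = M.runFrom (M.runFrom p t0 (V n)) (subt t0 (V n)) (st n).1 ∧
      Even (M.maxRankOn (M.runFrom (M.runFrom p t0 (V n)) (subt t0 (V n)) (st n).1)
        (seg (subt (subt t0 (V n)) (st n).1) ((st n).2.1 :: (st n).2.2))) := by
    intro n
    exact pick_spec M (acceptsFrom_subt M H0 (V n))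
  -- the loop at stage n
  have hBev : ∀ n, Even (M.maxRankOn (a n)
      (seg (subt t0 (W n)) ((st n).2.1 :: (st n).2.2))) := by
    intro n
    have := (spec n).2
    rwa [hRa, hsub] at this
  have hBfollow : ∀ n, M.follow (a n)
      (seg (subt t0 (W n)) ((st n).2.1 :: (st n).2.2)) = a n := by
    intro n
    rw [follow_seg]
    have e1 : M.runFrom (a n) (subt t0 (W n)) ((st n).2.1 :: (st n).2.2)
        = M.runFrom p t0 (W n ++ (st n).2.1 :: (st n).2.2) := by
      rw [ha]; exact (runFrom_append ..).symm
    have e2 : W n ++ (st n).2.1 :: (st n).2.2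
        = V n ++ ((st n).1 ++ (st n).2.1 :: (st n).2.2) := by
      rw [hWVn, List.append_assoc]
    rw [e1, e2, runFrom_append, (spec n).1, hRa]
  -- parity data along the path π
  have H0π := H0 π
  have hfb : ∀ n, M.rank (M.runFrom p t0 (pref π n)) ≤ Finset.univ.sup M.rank :=
    fun n => rank_le_sup M _
  obtain ⟨r, hEv, hfreq, N, hN⟩ := extract hfb H0π
  -- pigeonhole on (state, loop max rank)
  set B := Finset.univ.sup M.rank with hB
  set s : ℕ → ℕ := fun n => M.maxRankOn (a n) (seg (subt t0 (W n)) ((st n).2.1 :: (st n).2.2))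
    with hs
  have hsB : ∀ n, s n < B + 1 := fun n => Nat.lt_succ_of_le (maxRankOn_le_sup M _ _)
  obtain ⟨y, hy⟩ := freq_of_finite (fun n => ((a n, ⟨s n, hsB n⟩) : Q × Fin (B + 1)))
  obtain ⟨i, hiN, hgi⟩ := hy N
  obtain ⟨m, him, hfm⟩ := hfreq (W i).length
  obtain ⟨j, hjm, hgj⟩ := hy (max (i + 1) m)
  have hij : i + 1 ≤ j := le_trans (le_max_left _ _) hjm
  have hmj : m ≤ j := le_trans (le_max_right _ _) hjm
  have haij : a i = a j := by
    have := hgi.trans hgj.symm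
    exact congrArg Prod.fst this
  -- lengths
  have hlenVW : ∀ n, (V n).length ≤ (W n).length := fun n => (V_prefix_W M p t0 n).length_le
  have hlenV : ∀ n, n ≤ (V n).length := fun n => lenV M p t0 n
  have hWiN : N ≤ (W i).length := le_trans hiN (le_trans (hlenV i) (hlenVW i))
  have hWjm : m ≤ (W j).length := le_trans hmj (le_trans (hlenV j) (hlenVW j))
  have hWiWj : W i <+: W j :=
    (W_prefix_Vsucc M p t0 i).trans ((Vmono M p t0 hij).trans (V_prefix_W M p t0 j))
  obtain ⟨z, hz⟩ := hWiWj
  have hzlen : (W i).length + z.length = (W j).length := by rw [← hz]; simp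
  have hWilt : (W i).length < (W j).length := by
    have h1 : (V (i+1)).length = (W i).length + 1 := by
      rw [hV, Vseq_succ]; simp [hW]
    have h2 : (V (i+1)).length ≤ (V j).length := (Vmono M p t0 hij).length_le
    have := hlenVW j
    omega
  have hzne : z ≠ [] := by
    intro hcon
    rw [hcon] at hzlen
    simp at hzlen
    omega
  -- the second loop: along π from W i to W j
  have hAfollow : M.follow (a i) (seg (subt t0 (W i)) z) = a i := by
    rw [follow_seg]
    have e1 : M.runFrom (a i) (subt t0 (W i)) z = M.runFrom p t0 (W i ++ z) := by
      rw [ha]; exact (runFrom_append ..).symm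
    rw [e1, hz, haij]
  have hpref_f : ∀ u', u' <+: z →
      M.rank (M.runFrom (a i) (subt t0 (W i)) u')
        = M.rank (M.runFrom p t0 (pref π ((W i).length + u'.length))) := by
    intro u' hu'
    have e1 : M.runFrom (a i) (subt t0 (W i)) u' = M.runFrom p t0 (W i ++ u') := by
      rw [ha]; exact (runFrom_append ..).symm
    have hWp : W i ++ u' <+: pref π (W j).length := by
      rw [hπ, W_eq_pref, ← hW, ← hz]
      obtain ⟨w, rfl⟩ := hu'
      rw [← List.append_assoc]
      exact List.prefix_append _ _
    have := eq_pref_of_prefix hWp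
    rw [List.length_append] at this
    rw [e1, ← this]
  have hAmax : M.maxRankOn (a i) (seg (subt t0 (W i)) z) = r := by
    apply _root_.le_antisymm
    · apply maxRankOn_le
      intro u' hu'
      rw [hpref_f u' hu']
      exact hN _ (by omega)
    · have hpre : z.take (m - (W i).length) <+: z := List.take_prefix _ _
      have hlt : (z.take (m - (W i).length)).length = m - (W i).length := by
        rw [List.length_take]
        omega
      have := le_maxRankOn M (a i) (subt t0 (W i)) hpre
      rw [hpref_f _ hpre, hlt, show (W i).length + (m - (W i).length) = m by omega, hfm]
        at this
      exact this
  -- heads of the two loops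
  obtain ⟨zh, zt, rfl⟩ : ∃ zh zt, z = zh :: zt := by
    rcases z with _ | ⟨zh, zt⟩
    · exact absurd rfl hzne
    · exact ⟨zh, zt, rfl⟩
  have hzh : zh = !(st i).2.1 := by
    have e3 : (W j)[(W i).length]? = some zh := by
      rw [← hz, List.getElem?_append_right (le_refl (W i).length)]
      simp
    have e4 : (W j)[(W i).length]? = some (π (W i).length) := by
      rw [List.getElem?_eq_getElem hWilt]
      exact congrArg some (getW M p t0 hWilt)
    have hlen1 : (W i).length < (V (i+1)).length := by
      rw [hV, Vseq_succ]; simp [hW]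
    have h5a : (V (i+1))[(W i).length]? = some (π (W i).length) := by
      rw [List.getElem?_eq_getElem hlen1]
      exact congrArg some (getV M p t0 hlen1)
    have h5b : (V (i+1))[(W i).length]? = some (!(st i).2.1) := by
      have hVs : V (i+1) = W i ++ [!(st i).2.1] := Vseq_succ M p t0 i
      rw [hVs, List.getElem?_append_right (le_refl (W i).length)]
      simp
    have e5 : π (W i).length = !(st i).2.1 :=
      Option.some.inj (h5a.symm.trans h5b)
    rw [e4] at e3
    rw [← e5]
    exact (Option.some.inj e3).symm
  -- assemble
  refine ⟨a i, seg t0 (W i),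
    seg (subt t0 (W i)) ((st i).2.1 :: (st i).2.2),
    seg (subt t0 (W i)) (zh :: zt),
    ?_, ⟨by simp, hBfollow i⟩, hBev i, ⟨by simp, hAfollow⟩, ?_, 0, by simp, by simp,
    ?_, (subt t0 (W i)) [], (st i).2.1, zh, ?_, ?_, ?_⟩
  · rw [follow_seg]
  · rw [hAmax]; exact hEv
  · intro j' hj'
    exact absurd hj' (Nat.not_lt_zero j')
  · rw [seg_cons]
    simp
  · rw [seg_cons]
    simp
  · rw [hzh]; cases (st i).2.1 <;> simp

end BranchAux



/-- from every productive state `p` there is a path to a state `q`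
carrying two branching accepting loops. The branching position is given 0-indexed by
`kk` (so the 1-indexed position `kk + 1` is at most the length of each loop). -/
theorem productive_state_branching_loops {Alpha Q : Type}
    [Fintype Alpha] [Nonempty Alpha] [Fintype Q]
    (M : DPTA Alpha Q) (p : Q) (hp : M.Productive p) :
    ∃ (q : Q) (path l0 l1 : List (Alpha × Bool)),
      M.follow p path = q ∧
      M.IsLoop q l0 ∧ Even (M.maxRankOn q l0) ∧
      M.IsLoop q l1 ∧ Even (M.maxRankOn q l1) ∧
      ∃ kk : ℕ, kk < l0.length ∧ kk < l1.length ∧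
        (∀ j, j < kk → l0[j]? = l1[j]?) ∧
        ∃ s d0 d1, l0[kk]? = some (s, d0) ∧ l1[kk]? = some (s, d1) ∧ d0 ≠ d1 := by
  obtain ⟨t, ht, v, hv⟩ := hp
  have H0 : M.AcceptsFrom p (BranchAux.subt t v) := by
    have := BranchAux.acceptsFrom_subt M ht v
    rwa [show M.runFrom M.init t v = p from hv] at this
  exact BranchAux.main M p (BranchAux.subt t v) H0
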